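/- For the windability obstruction with x = 0110 and y = 1001: if B(x,y,M) ≥ 0 satisfy the windability conditions for f*, then B(0110,1001,M₁) = B(1010,0101,M₁), where M₁ = {(x₁,x₂),(x₃,x₄)} and the flip set S = {x₁,x₂}. Since f*(1010)·f*(0101) = 0 and all B values are nonnegative, B(0110,1001,M₁) = 0. -/

import Mathlib

open scoped Classical

/-- Flip the coordinates of `x` indexed by `S`. -/
def flipS (x : Fin 4 → Bool) (S : Finset (Fin 4)) : Fin 4 → Bool :=
  fun i => if i ∈ S then !(x i) else x i

/-- Coordinatewise XOR `x ⊕ y`. -/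
def xorConf (x y : Fin 4 → Bool) : Fin 4 → Bool := fun i => xor (x i) (y i)

/-- `M ∈ 𝓜_z`: `M` is a partition of the support `{i : z i = 1}` into pairs and at
most one singleton. -/
def IsPairing (z : Fin 4 → Bool) (M : Finset (Finset (Fin 4))) : Prop :=
  (∀ S ∈ M, S.card = 2 ∨ S.card = 1) ∧
  (M.filter (fun S => S.card = 1)).card ≤ 1 ∧
  (∀ S ∈ M, ∀ T ∈ M, S ≠ T → Disjoint S T) ∧
  (∀ i : Fin 4, z i = true ↔ ∃ S ∈ M, i ∈ S)

/-- The six-vertex constraint function `f*` with `f*(0011)=1`, `f*(0110)=f*(1001)=b`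
and `f* = 0` elsewhere. -/
def fstar (b : ℚ) : (Fin 4 → Bool) → ℚ := fun x =>
  if x = ![false, false, true, true] then 1
  else if x = ![false, true, true, false] then b
  else if x = ![true, false, false, true] then b
  else 0

/-- The matching `M₁ = {(x₁,x₂),(x₃,x₄)}` of `{1,2,3,4}`. -/
def M1 : Finset (Finset (Fin 4)) := {({0, 1} : Finset (Fin 4)), ({2, 3} : Finset (Fin 4))}

/-- For `x = 0110`, `y = 1001`: any `B` satisfying the windability conditions for `f*`
satisfies `B(0110,1001,M₁) = B(1010,0101,M₁)` (flip `S = {x₁,x₂}`), and hence, since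
`f*(1010)·f*(0101) = 0` and all `B` values are nonnegative, `B(0110,1001,M₁) = 0`. -/
theorem stmt1 (b : ℚ) (hb : 0 < b)
    (B : (Fin 4 → Bool) → (Fin 4 → Bool) → Finset (Finset (Fin 4)) → ℚ)
    (hBnn : ∀ x y M, IsPairing (xorConf x y) M → 0 ≤ B x y M)
    (hBsum : ∀ x y : Fin 4 → Bool,
      fstar b x * fstar b y =
        ∑ M ∈ Finset.univ.filter (fun M => IsPairing (xorConf x y) M), B x y M)
    (hBflip : ∀ x y M, IsPairing (xorConf x y) M → ∀ S ∈ M,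
      B x y M = B (flipS x S) (flipS y S) M) :
    B ![false, true, true, false] ![true, false, false, true] M1 =
        B ![true, false, true, false] ![false, true, false, true] M1 ∧
      B ![false, true, true, false] ![true, false, false, true] M1 = 0 := by

  have hP : IsPairing (xorConf ![false, true, true, false] ![true, false, false, true]) M1 := by
    constructor
    · decide
    constructor
    · decide
    constructor
    · decide
    · decide
  have hS : ({0, 1} : Finset (Fin 4)) ∈ M1 := by decide
  have hflipx : flipS ![false, true, true, false] ({0,1} : Finset (Fin 4)) =
      ![true, false, true, false] := by
    funext i; fin_cases i <;> rfl
  have hflipy : flipS ![true, false, false, true] ({0,1} : Finset (Fin 4)) =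
      ![false, true, false, true] := by
    funext i; fin_cases i <;> rfl
  have heq : B ![false, true, true, false] ![true, false, false, true] M1 =
      B ![true, false, true, false] ![false, true, false, true] M1 := by
    have := hBflip _ _ _ hP ({0,1} : Finset (Fin 4)) hS
    rwa [hflipx, hflipy] at this
  refine ⟨heq, ?_⟩
  rw [heq]
  have hsum := hBsum ![true, false, true, false] ![false, true, false, true]
  have hL : fstar b ![true, false, true, false] * fstar b ![false, true, false, true] = 0 := by
    unfold fstar
    norm_num [Matrix.vecHead, Matrix.vecTail]
  rw [hL] at hsum
  have hP' : IsPairing (xorConf ![true, false, true, false] ![false, true, false, true]) M1 := by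
    constructor
    · decide
    constructor
    · decide
    constructor
    · decide
    · decide
  have hmem : M1 ∈ Finset.univ.filter
      (fun M => IsPairing (xorConf ![true, false, true, false] ![false, true, false, true]) M) := by
    simp [Finset.mem_filter, hP']
  have := (Finset.sum_eq_zero_iff_of_nonneg (fun M hM => hBnn _ _ M
      ((Finset.mem_filter.mp hM).2))).mp hsum.symm M1 hmem
  exact this
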